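/- arXiv:2603.25675 — 2 statements merged into one kernel-verified Lean document; each statement's English description precedes it below -/
import Mathlib

section
/- In the setting of semi-discrete optimal transport on a compact metric space (X,d), with μ = Σ_{j=1}^n α_j δ_{y^j} atomic (distinct atoms, positive weights α_j summing to 1), ν ∈ P(X), dual maximizer ψ ∈ ℝⁿ, Laguerre cells A_j and tie sets Σ_j, and an optimal coupling π ∈ Γ₀(ν,μ): for each j, the restriction of π to L_j := (A_j \ Σ_j) × X equals ν|_{A_j \ Σ_j} ⊗ δ_{y^j}. Consequently, ∫_{L_j} d²(x,y) dπ(x,y) = ∫_{A_j \ Σ_j} d²(x, y^j) dν(x). -/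
open MeasureTheory

/-- `π` is a coupling of `ν` and `μ`. -/
def IsCoupling {X : Type*} [MeasurableSpace X]
    (π : Measure (X × X)) (ν μ : Measure X) : Prop :=
  π.map Prod.fst = ν ∧ π.map Prod.snd = μ

/-- `π` is an optimal coupling of `ν` and `μ` for the squared-distance cost. -/
def IsOptimalCoupling {X : Type*} [MetricSpace X] [MeasurableSpace X]
    (π : Measure (X × X)) (ν μ : Measure X) : Prop :=
  IsCoupling π ν μ ∧ ∀ π' : Measure (X × X), IsCoupling π' ν μ →
    (∫ p : X × X, dist p.1 p.2 ^ 2 ∂π) ≤ ∫ p : X × X, dist p.1 p.2 ^ 2 ∂π'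

/-- The c-transform `ψ^c(x) = min_j ( d²(x, y^j) - ψ^j )`. -/
noncomputable def psiC {X : Type*} [MetricSpace X] {n : ℕ}
    (y : Fin n → X) (ψ : Fin n → ℝ) (x : X) : ℝ :=
  ⨅ j, (dist x (y j) ^ 2 - ψ j)

/-- The Kantorovich dual functional for semi-discrete optimal transport. -/
noncomputable def dualFun {X : Type*} [MetricSpace X] [MeasurableSpace X] {n : ℕ}
    (y : Fin n → X) (α : Fin n → ℝ) (ν : Measure X) (ψ : Fin n → ℝ) : ℝ :=
  (∫ x, psiC y ψ x ∂ν) + ∑ j, α j * ψ j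

/-- The Laguerre cell `A_j`. -/
def Lag {X : Type*} [MetricSpace X] {n : ℕ}
    (y : Fin n → X) (ψ : Fin n → ℝ) (j : Fin n) : Set X :=
  {x | ∀ i, i ≠ j → dist x (y j) ^ 2 - ψ j ≤ dist x (y i) ^ 2 - ψ i}

/-- The tie set `Σ_j = ∪_{i ≠ j} (A_j ∩ A_i)`. -/
def TieSet {X : Type*} [MetricSpace X] {n : ℕ}
    (y : Fin n → X) (ψ : Fin n → ℝ) (j : Fin n) : Set X :=
  ⋃ i ∈ {i : Fin n | i ≠ j}, (Lag y ψ j ∩ Lag y ψ i)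

open Finset

set_option linter.unusedSectionVars false

section Flow
variable {S D : Type*} [Fintype S] [Fintype D]

/-- feasibility predicate for partial flows -/
def IsFeas (E : S → D → Prop) (s : S → ℝ) (a : D → ℝ) (f : S → D → ℝ) : Prop :=
  (∀ P i, 0 ≤ f P i) ∧ (∀ P i, ¬ E P i → f P i = 0) ∧
  (∀ P, ∑ i, f P i ≤ s P) ∧ (∀ i, ∑ P, f P i ≤ a i)

/-- total mass of a flow -/
def totF (f : S → D → ℝ) : ℝ := ∑ P, ∑ i, f P i

/-- demands reachable from `i₀` by alternating paths with positive flow backward edges -/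
inductive FlowReach (E : S → D → Prop) (f : S → D → ℝ) (i₀ : D) : D → Prop
  | base : FlowReach E f i₀ i₀
  | step {i i' : D} (P : S) : FlowReach E f i₀ i → E P i → 0 < f P i' → FlowReach E f i₀ i'

lemma FlowReach.mono {E : S → D → Prop} {f g : S → D → ℝ} {i₀ i : D}
    (h : FlowReach E f i₀ i) (hfg : ∀ P u, 0 < f P u → 0 < g P u) :
    FlowReach E g i₀ i := by
  induction h with
  | base => exact .base
  | step P _ hE hpos ih => exact .step P ih hE (hfg _ _ hpos)

variable [DecidableEq S] [DecidableEq D]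

/-- add `δ` to the `(P,i)` entry -/
def bump (f : S → D → ℝ) (P : S) (i : D) (δ : ℝ) : S → D → ℝ :=
  fun Q u => f Q u + if Q = P ∧ u = i then δ else 0

lemma bump_apply (f : S → D → ℝ) (P : S) (i : D) (δ : ℝ) (Q : S) (u : D) :
    bump f P i δ Q u = f Q u + if Q = P ∧ u = i then δ else 0 := rfl

lemma bump_row (f : S → D → ℝ) (P : S) (i : D) (δ : ℝ) (Q : S) :
    ∑ u, bump f P i δ Q u = (∑ u, f Q u) + if Q = P then δ else 0 := by
  rw [show (∑ u, bump f P i δ Q u) = ∑ u, (f Q u + if Q = P ∧ u = i then δ else 0) from rfl,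
    Finset.sum_add_distrib]
  congr 1
  by_cases h : Q = P <;> simp [h]

lemma bump_col (f : S → D → ℝ) (P : S) (i : D) (δ : ℝ) (u : D) :
    ∑ Q, bump f P i δ Q u = (∑ Q, f Q u) + if u = i then δ else 0 := by
  rw [show (∑ Q, bump f P i δ Q u) = ∑ Q, (f Q u + if Q = P ∧ u = i then δ else 0) from rfl,
    Finset.sum_add_distrib]
  congr 1
  by_cases h : u = i <;> simp [h]

lemma bump_tot (f : S → D → ℝ) (P : S) (i : D) (δ : ℝ) :
    totF (bump f P i δ) = totF f + δ := by
  unfold totF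
  rw [show (∑ Q, ∑ u, bump f P i δ Q u) = ∑ Q, ((∑ u, f Q u) + if Q = P then δ else 0) from
    Finset.sum_congr rfl (fun Q _ => bump_row f P i δ Q), Finset.sum_add_distrib]
  simp

/-- Augmentation lemma: a reachable supply with slack lets us strictly increase total flow. -/
lemma flow_aug {E : S → D → Prop} {s : S → ℝ} {a : D → ℝ} {f : S → D → ℝ} {i₀ i : D}
    (hreach : FlowReach E f i₀ i) :
    ∀ g : S → D → ℝ, IsFeas E s a g → (∀ P u, 0 < f P u → 0 < g P u) →
    (∑ P, g P i₀ < a i₀) → ∀ P : S, E P i → (∑ u, g P u < s P) →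
    ∃ h : S → D → ℝ, IsFeas E s a h ∧ totF g < totF h := by
  induction hreach with
  | base =>
    intro g hg hpos hcol P hE hrow
    obtain ⟨hg0, hgE, hgrow, hgcol⟩ := hg
    set δ := min (s P - ∑ u, g P u) (a i₀ - ∑ Q, g Q i₀) with hδ
    have hδ1 : δ ≤ s P - ∑ u, g P u := min_le_left _ _
    have hδ2 : δ ≤ a i₀ - ∑ Q, g Q i₀ := min_le_right _ _
    have hδpos : 0 < δ := lt_min (by linarith) (by linarith)
    refine ⟨bump g P i₀ δ, ⟨?_, ?_, ?_, ?_⟩, ?_⟩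
    · intro Q u; rw [bump_apply]; split
      · exact add_nonneg (hg0 _ _) hδpos.le
      · simpa using hg0 Q u
    · intro Q u hQu; rw [bump_apply]; split
      · next h => exact absurd (by rw [h.1, h.2]; exact hE) hQu
      · simp [hgE Q u hQu]
    · intro Q; rw [bump_row]; split
      · next h => subst h; linarith
      · simpa using hgrow Q
    · intro u; rw [bump_col]; split
      · next h => subst h; linarith
      · simpa using hgcol u
    · rw [bump_tot]; linarith
  | @step i i' P' hre hE' hpos' ih =>
    intro g hg hposg hcol P hE hrow
    obtain ⟨hg0, hgE, hgrow, hgcol⟩ := hg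
    have hgP' : 0 < g P' i' := hposg _ _ hpos'
    by_cases hPP : P = P'
    · exact ih g ⟨hg0, hgE, hgrow, hgcol⟩ hposg hcol P' hE' (hPP ▸ hrow)
    have hE'' : E P' i' := by
      by_contra h; exact absurd (hgE P' i' h) (ne_of_gt hgP')
    set δ := min (s P - ∑ u, g P u) (g P' i') / 2 with hδ
    have hδpos : 0 < δ := div_pos (lt_min (by linarith) hgP') (by norm_num)
    have hδ1 : δ ≤ (s P - ∑ u, g P u) / 2 :=
      div_le_div_of_nonneg_right (min_le_left _ _) (by norm_num) |>.trans_eq rfl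
    have hδ2 : δ ≤ g P' i' / 2 :=
      div_le_div_of_nonneg_right (min_le_right _ _) (by norm_num) |>.trans_eq rfl
    set g' := bump (bump g P i' δ) P' i' (-δ) with hg'def
    have hg'app : ∀ Q u, g' Q u = g Q u + (if Q = P ∧ u = i' then δ else 0)
        + (if Q = P' ∧ u = i' then -δ else 0) := fun Q u => rfl
    have hg'row : ∀ Q, ∑ u, g' Q u
        = (∑ u, g Q u) + (if Q = P then δ else 0) + (if Q = P' then -δ else 0) := by
      intro Q
      rw [hg'def, bump_row, bump_row]
    have hg'col : ∀ u, ∑ Q, g' Q u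
        = (∑ Q, g Q u) + (if u = i' then δ else 0) + (if u = i' then -δ else 0) := by
      intro u
      rw [hg'def, bump_col, bump_col]
    have hg'col' : ∀ u, ∑ Q, g' Q u = ∑ Q, g Q u := by
      intro u; rw [hg'col]; split <;> ring
    have hg'pos : ∀ Q u, 0 < g Q u → 0 < g' Q u := by
      intro Q u h; rw [hg'app]
      by_cases h1 : Q = P ∧ u = i'
      · have h2 : ¬ (Q = P' ∧ u = i') := fun hc => hPP (h1.1 ▸ hc.1 ▸ rfl)
        simp only [if_pos h1, if_neg h2]; linarith
      · by_cases h2 : Q = P' ∧ u = i'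
        · simp only [if_neg h1, if_pos h2]
          have : g Q u = g P' i' := by rw [h2.1, h2.2]
          rw [this] at h ⊢ ; linarith
        · simp only [if_neg h1, if_neg h2]; linarith
    have hg'feas : IsFeas E s a g' := by
      refine ⟨?_, ?_, ?_, ?_⟩
      · intro Q u
        by_cases hq : 0 < g Q u
        · exact (hg'pos Q u hq).le
        · have hq0 : g Q u = 0 := le_antisymm (not_lt.1 hq) (hg0 Q u)
          rw [hg'app, hq0]
          by_cases h1 : Q = P ∧ u = i'
          · have h2 : ¬ (Q = P' ∧ u = i') := fun hc => hPP (h1.1 ▸ hc.1 ▸ rfl)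
            simp only [if_pos h1, if_neg h2]; linarith
          · by_cases h2 : Q = P' ∧ u = i'
            · exfalso; have : g Q u = g P' i' := by rw [h2.1, h2.2]
              rw [hq0] at this; linarith
            · simp only [if_neg h1, if_neg h2]; linarith
      · intro Q u hQu; rw [hg'app, hgE Q u hQu]
        have h1 : ¬ (Q = P ∧ u = i') := fun h => hQu (by rw [h.1, h.2]; exact hE)
        have h2 : ¬ (Q = P' ∧ u = i') := fun h => hQu (by rw [h.1, h.2]; exact hE'')
        simp [h1, h2]
      · intro Q; rw [hg'row]
        by_cases h1 : Q = P
        · have h2 : Q ≠ P' := fun hc => hPP (h1 ▸ hc)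
          simp only [if_pos h1, if_neg h2]; subst h1; linarith
        · by_cases h2 : Q = P'
          · simp only [if_neg h1, if_pos h2]; subst h2
            have := hgrow Q; linarith
          · simp only [if_neg h1, if_neg h2]
            have := hgrow Q; linarith
      · intro u; rw [hg'col']; exact hgcol u
    have hcol' : ∑ Q, g' Q i₀ < a i₀ := by rw [hg'col']; exact hcol
    have hrow' : ∑ u, g' P' u < s P' := by
      have h1 : P' ≠ P := fun hc => hPP hc.symm
      rw [hg'row, if_neg h1, if_pos rfl]
      have := hgrow P'; linarith
    obtain ⟨h, hhfeas, hlt⟩ := ih g' hg'feas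
      (fun Q u hq => hg'pos Q u (hposg Q u hq)) hcol' P' hE' hrow'
    refine ⟨h, hhfeas, ?_⟩
    have : totF g' = totF g := by rw [hg'def, bump_tot, bump_tot]; ring
    linarith

theorem flow_exists (E : S → D → Prop) (s : S → ℝ) (a : D → ℝ)
    (hs : ∀ P, 0 ≤ s P) (ha : ∀ i, 0 ≤ a i)
    (htot : ∑ P, s P = ∑ i, a i)
    (hall : ∀ (I : Finset D) (Q : Finset S), (∀ P i, i ∈ I → E P i → P ∈ Q) →
      ∑ i ∈ I, a i ≤ ∑ P ∈ Q, s P) :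
    ∃ f : S → D → ℝ, (∀ P i, 0 ≤ f P i) ∧ (∀ P i, ¬ E P i → f P i = 0) ∧
      (∀ P, ∑ i, f P i = s P) ∧ (∀ i, ∑ P, f P i = a i) := by
  classical
  set Feas : Set (S → D → ℝ) := {f | IsFeas E s a f} with hFeas
  have hev : ∀ (P : S) (i : D), Continuous (fun f : S → D → ℝ => f P i) :=
    fun P i => (continuous_apply i).comp (continuous_apply P)
  have hTcont : Continuous (totF : (S → D → ℝ) → ℝ) :=
    continuous_finset_sum _ (fun P _ => continuous_finset_sum _ (fun i _ => hev P i))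
  have h0 : (0 : S → D → ℝ) ∈ Feas :=
    ⟨fun _ _ => le_refl 0, fun _ _ _ => rfl, by simp [hs], by simp [ha]⟩
  have hclosed : IsClosed Feas := by
    have h1 : IsClosed {f : S → D → ℝ | ∀ P i, 0 ≤ f P i} := by
      rw [Set.setOf_forall]
      refine isClosed_iInter fun P => ?_
      rw [Set.setOf_forall]
      exact isClosed_iInter fun i => isClosed_le continuous_const (hev P i)
    have h2 : IsClosed {f : S → D → ℝ | ∀ P i, ¬ E P i → f P i = 0} := by
      rw [Set.setOf_forall]
      refine isClosed_iInter fun P => ?_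
      rw [Set.setOf_forall]
      refine isClosed_iInter fun i => ?_
      by_cases hE : E P i
      · have : {f : S → D → ℝ | ¬E P i → f P i = 0} = Set.univ := by
          ext f; simp [hE]
        rw [this]; exact isClosed_univ
      · have : {f : S → D → ℝ | ¬E P i → f P i = 0} = {f | f P i = 0} := by
          ext f; simp [hE]
        rw [this]; exact isClosed_eq (hev P i) continuous_const
    have h3 : IsClosed {f : S → D → ℝ | ∀ P, ∑ i, f P i ≤ s P} := by
      rw [Set.setOf_forall]
      exact isClosed_iInter fun P => isClosed_le
        (continuous_finset_sum _ fun i _ => hev P i) continuous_const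
    have h4 : IsClosed {f : S → D → ℝ | ∀ i, ∑ P, f P i ≤ a i} := by
      rw [Set.setOf_forall]
      exact isClosed_iInter fun i => isClosed_le
        (continuous_finset_sum _ fun P _ => hev P i) continuous_const
    have : Feas = {f : S → D → ℝ | ∀ P i, 0 ≤ f P i} ∩
        ({f | ∀ P i, ¬ E P i → f P i = 0} ∩
        ({f | ∀ P, ∑ i, f P i ≤ s P} ∩ {f | ∀ i, ∑ P, f P i ≤ a i})) := rfl
    rw [this]
    exact h1.inter (h2.inter (h3.inter h4))
  have hsub : Feas ⊆ Set.univ.pi (fun P => Set.univ.pi fun _ : D => Set.Icc (0:ℝ) (s P)) := by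
    intro f hf
    rw [Set.mem_univ_pi]; intro P; rw [Set.mem_univ_pi]; intro i
    refine ⟨hf.1 P i, ?_⟩
    calc f P i ≤ ∑ u, f P u := Finset.single_le_sum (fun u _ => hf.1 P u) (mem_univ i)
    _ ≤ s P := hf.2.2.1 P
  have hcpt : IsCompact Feas := .of_isClosed_subset
    (isCompact_univ_pi fun P => isCompact_univ_pi fun _ => isCompact_Icc) hclosed hsub
  obtain ⟨f, hfF, hfmax⟩ := hcpt.exists_isMaxOn ⟨0, h0⟩ hTcont.continuousOn
  obtain ⟨hf0, hfE, hfrow, hfcol⟩ := hfF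
  have htotle : ∀ g ∈ Feas, totF g ≤ totF f := fun g hg => hfmax hg
  have hcoltot : totF f = ∑ i, ∑ P, f P i := Finset.sum_comm
  have key : totF f = ∑ i, a i := by
    by_contra hne
    have hlt : totF f < ∑ i, a i := lt_of_le_of_ne
      (by rw [hcoltot]; exact Finset.sum_le_sum fun i _ => hfcol i) hne
    obtain ⟨i₀, hi₀⟩ : ∃ i₀, ∑ P, f P i₀ < a i₀ := by
      by_contra hno; push_neg at hno
      have : ∑ i, a i ≤ totF f := by
        rw [hcoltot]; exact Finset.sum_le_sum fun i _ => hno i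
      linarith
    set I : Finset D := univ.filter (fun i => FlowReach E f i₀ i) with hI
    set Q : Finset S := univ.filter (fun P => ∃ i ∈ I, E P i) with hQ
    have hQrow : ∀ P ∈ Q, ∑ u, f P u = s P := by
      intro P hP
      by_contra hne'
      have hlt' : ∑ u, f P u < s P := lt_of_le_of_ne (hfrow P) hne'
      obtain ⟨i, hiI, hE⟩ := (mem_filter.1 hP).2
      have hre : FlowReach E f i₀ i := (mem_filter.1 hiI).2
      obtain ⟨h, hhF, hhlt⟩ := flow_aug hre f ⟨hf0, hfE, hfrow, hfcol⟩
        (fun _ _ h => h) hi₀ P hE hlt'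
      exact absurd (htotle h hhF) (not_le.2 hhlt)
    have hQmem : ∀ P ∈ Q, ∀ u, 0 < f P u → u ∈ I := by
      intro P hP u hu
      obtain ⟨i, hiI, hE⟩ := (mem_filter.1 hP).2
      exact mem_filter.2 ⟨mem_univ u, .step P (mem_filter.1 hiI).2 hE hu⟩
    have hchain : ∑ P ∈ Q, s P < ∑ i ∈ I, a i := by
      have h1 : ∑ P ∈ Q, s P = ∑ P ∈ Q, ∑ u ∈ I, f P u := by
        refine Finset.sum_congr rfl fun P hP => ?_
        rw [← hQrow P hP]
        symm
        refine Finset.sum_subset (subset_univ I) fun u _ hu => ?_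
        by_contra h
        exact hu (hQmem P hP u (lt_of_le_of_ne (hf0 P u) (Ne.symm h)))
      rw [h1, Finset.sum_comm]
      refine Finset.sum_lt_sum (fun u huI => ?_) ⟨i₀, ?_, ?_⟩
      · exact (Finset.sum_le_sum_of_subset_of_nonneg (subset_univ Q)
          (fun P _ _ => hf0 P u)).trans (hfcol u)
      · exact mem_filter.2 ⟨mem_univ i₀, .base⟩
      · exact lt_of_le_of_lt (Finset.sum_le_sum_of_subset_of_nonneg (subset_univ Q)
          fun P _ _ => hf0 P i₀) hi₀
    exact absurd (hall I Q fun P i hiI hE => mem_filter.2 ⟨mem_univ P, ⟨i, hiI, hE⟩⟩)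
      (not_le.2 hchain)
  have hcols : ∀ i, ∑ P, f P i = a i := by
    intro i
    by_contra hne
    have h1 : ∑ P, f P i < a i := lt_of_le_of_ne (hfcol i) hne
    have : totF f < ∑ i, a i := by
      rw [hcoltot]
      exact Finset.sum_lt_sum (fun u _ => hfcol u) ⟨i, mem_univ i, h1⟩
    linarith
  have hrows : ∀ P, ∑ i, f P i = s P := by
    intro P
    by_contra hne
    have h1 : ∑ i, f P i < s P := lt_of_le_of_ne (hfrow P) hne
    have : totF f < ∑ P, s P :=
      Finset.sum_lt_sum (fun P _ => hfrow P) ⟨P, mem_univ P, h1⟩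
    rw [htot] at this; linarith
  exact ⟨f, hf0, hfE, hrows, hcols⟩

end Flow



section Basics
variable {X : Type*} [MetricSpace X] {n : ℕ} {y : Fin n → X} {ψ : Fin n → ℝ}

lemma psiC_le (hn : 0 < n) (x : X) (i : Fin n) :
    psiC y ψ x ≤ dist x (y i) ^ 2 - ψ i := by
  haveI : Nonempty (Fin n) := Fin.pos_iff_nonempty.1 hn
  exact ciInf_le (Set.Finite.bddBelow (Set.finite_range _)) i

lemma psiC_eq_of_mem (hn : 0 < n) {x : X} {k : Fin n} (hk : x ∈ Lag y ψ k) :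
    psiC y ψ x = dist x (y k) ^ 2 - ψ k := by
  haveI : Nonempty (Fin n) := Fin.pos_iff_nonempty.1 hn
  refine le_antisymm (psiC_le hn x k) (le_ciInf fun i => ?_)
  by_cases h : i = k
  · subst h; exact le_refl _
  · exact hk i h

lemma exists_mem_Lag (hn : 0 < n) (x : X) : ∃ k, x ∈ Lag y ψ k := by
  haveI : Nonempty (Fin n) := Fin.pos_iff_nonempty.1 hn
  obtain ⟨k, hk⟩ := Finite.exists_min (fun i => dist x (y i) ^ 2 - ψ i)
  exact ⟨k, fun i _ => hk i⟩

lemma strict_cell_lt (hn : 0 < n) {x : X} {j : Fin n}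
    (hx : x ∈ Lag y ψ j \ TieSet y ψ j) {i : Fin n} (hij : i ≠ j) :
    dist x (y j) ^ 2 - ψ j < dist x (y i) ^ 2 - ψ i := by
  obtain ⟨hLag, hTie⟩ := hx
  rcases lt_or_eq_of_le (hLag i hij) with h | h
  · exact h
  · exfalso
    apply hTie
    have hLagi : x ∈ Lag y ψ i := by
      intro k hk
      rw [← h]
      by_cases hkj : k = j
      · subst hkj; exact le_refl _
      · exact hLag k hkj
    exact Set.mem_biUnion (show i ∈ {i : Fin n | i ≠ j} from hij) ⟨hLag, hLagi⟩

lemma continuous_cost (c : X) : Continuous (fun x : X => dist x c ^ 2) :=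
  ((continuous_id.dist continuous_const).pow 2)

lemma continuous_psiC (hn : 0 < n) : Continuous (psiC y ψ) := by
  haveI : Nonempty (Fin n) := Fin.pos_iff_nonempty.1 hn
  have : psiC y ψ = fun x => Finset.univ.inf' Finset.univ_nonempty
      (fun j => dist x (y j) ^ 2 - ψ j) := by
    funext x
    rw [Finset.inf'_univ_eq_ciInf]
    rfl
  rw [this]
  exact Continuous.finset_inf'_apply _ fun i _ => (continuous_cost (y i)).sub continuous_const

lemma isClosed_Lag (j : Fin n) : IsClosed (Lag y ψ j) := by
  have : Lag y ψ j = ⋂ i, {x : X | i ≠ j → dist x (y j) ^ 2 - ψ j ≤ dist x (y i) ^ 2 - ψ i} := by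
    ext x; simp [Lag]
  rw [this]
  refine isClosed_iInter fun i => ?_
  by_cases h : i = j
  · have : {x : X | i ≠ j → dist x (y j) ^ 2 - ψ j ≤ dist x (y i) ^ 2 - ψ i} = Set.univ := by
      ext x; simp [h]
    rw [this]; exact isClosed_univ
  · have : {x : X | i ≠ j → dist x (y j) ^ 2 - ψ j ≤ dist x (y i) ^ 2 - ψ i}
        = {x : X | dist x (y j) ^ 2 - ψ j ≤ dist x (y i) ^ 2 - ψ i} := by
      ext x; simp [h]
    rw [this]
    exact isClosed_le ((continuous_cost (y j)).sub continuous_const)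
      ((continuous_cost (y i)).sub continuous_const)

lemma isClosed_TieSet (j : Fin n) : IsClosed (TieSet y ψ j) :=
  (Set.toFinite _).isClosed_biUnion fun i _ => (isClosed_Lag j).inter (isClosed_Lag i)

end Basics

section HallMeasure
variable {X : Type*} [MetricSpace X] [CompactSpace X] [MeasurableSpace X] [BorelSpace X]

lemma cont_integrable {f : X → ℝ} (hf : Continuous f) (μ : Measure X) [IsFiniteMeasure μ] :
    Integrable f μ := by
  rw [← MeasureTheory.integrableOn_univ]
  exact hf.continuousOn.integrableOn_compact isCompact_univ

variable {n : ℕ} {y : Fin n → X} {α : Fin n → ℝ} {ψ : Fin n → ℝ}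

lemma hall_measure (hn : 0 < n) (ν : Measure X) [IsProbabilityMeasure ν]
    (hmax : ∀ φ : Fin n → ℝ, dualFun y α ν φ ≤ dualFun y α ν ψ) (I : Finset (Fin n)) :
    ∑ k ∈ I, α k ≤ (ν (⋃ k ∈ I, Lag y ψ k)).toReal := by
  haveI : Nonempty (Fin n) := Fin.pos_iff_nonempty.1 hn
  rcases I.eq_empty_or_nonempty with hI | hne
  · simp [hI, ENNReal.toReal_nonneg]
  classical
  set U : Set X := ⋃ k ∈ I, Lag y ψ k with hU
  have hUmeas : MeasurableSet U :=
    ((Set.toFinite _).isClosed_biUnion fun k _ => isClosed_Lag k).measurableSet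
  -- perturbed potentials
  set Ψ : ℝ → Fin n → ℝ := fun t k => ψ k + if k ∈ I then t else 0 with hΨ
  have hcontΨ : ∀ t, Continuous (psiC y (Ψ t)) := fun t => continuous_psiC hn
  have hcont : Continuous (psiC y ψ) := continuous_psiC hn
  -- basic bounds, for t > 0
  have hmono : ∀ t (x : X), 0 ≤ t → psiC y (Ψ t) x ≤ psiC y ψ x := by
    intro t x ht
    refine ciInf_mono (Set.Finite.bddBelow (Set.finite_range _)) fun i => ?_
    have : ψ i ≤ Ψ t i := by
      rw [hΨ]; dsimp only; split <;> linarith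
    exact sub_le_sub_left this _
  have hlb : ∀ t (x : X), 0 ≤ t → psiC y ψ x - t ≤ psiC y (Ψ t) x := by
    intro t x ht
    refine le_ciInf fun i => ?_
    have h1 : psiC y ψ x ≤ dist x (y i) ^ 2 - ψ i := psiC_le hn x i
    have h2 : Ψ t i ≤ ψ i + t := by
      rw [hΨ]; dsimp only; split <;> linarith
    linarith
  -- dual maximality inequality
  have hdual : ∀ t : ℝ, 0 < t →
      t * ∑ k ∈ I, α k ≤ ∫ x, (psiC y ψ x - psiC y (Ψ t) x) ∂ν := by
    intro t ht
    have h := hmax (Ψ t)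
    rw [dualFun, dualFun] at h
    have hsum : ∑ j, α j * Ψ t j = (∑ j, α j * ψ j) + t * ∑ k ∈ I, α k := by
      rw [hΨ]
      dsimp only
      have : ∀ j, α j * (ψ j + if j ∈ I then t else 0)
          = α j * ψ j + (if j ∈ I then α j * t else 0) := by
        intro j; split <;> ring
      rw [Finset.sum_congr rfl fun j _ => this j, Finset.sum_add_distrib,
        Finset.sum_ite_mem, Finset.univ_inter, ← Finset.sum_mul]
      ring
    rw [hsum] at h
    have hint : ∫ x, (psiC y ψ x - psiC y (Ψ t) x) ∂ν
        = (∫ x, psiC y ψ x ∂ν) - ∫ x, psiC y (Ψ t) x ∂ν :=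
      MeasureTheory.integral_sub (cont_integrable hcont ν) (cont_integrable (hcontΨ t) ν)
    rw [hint]
    linarith
  -- the sequence of difference quotients
  set F : ℕ → X → ℝ := fun m x => (m + 1 : ℝ) * (psiC y ψ x - psiC y (Ψ (1 / (m + 1))) x)
    with hF
  have htm : ∀ m : ℕ, (0 : ℝ) < 1 / (m + 1) := by
    intro m; positivity
  have hFle : ∀ m, ∑ k ∈ I, α k ≤ ∫ x, F m x ∂ν := by
    intro m
    have h := hdual (1 / (m + 1)) (htm m)
    rw [hF]
    dsimp only
    rw [MeasureTheory.integral_const_mul]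
    have hm1 : (0:ℝ) < (m + 1 : ℝ) := by positivity
    calc ∑ k ∈ I, α k = (m+1:ℝ) * ((1/((m:ℝ)+1)) * ∑ k ∈ I, α k) := by
          field_simp
      _ ≤ (m+1:ℝ) * ∫ x, (psiC y ψ x - psiC y (Ψ (1/(m+1))) x) ∂ν :=
          mul_le_mul_of_nonneg_left h hm1.le
  -- pointwise limit
  have hlim : ∀ x : X, Filter.Tendsto (fun m => F m x) Filter.atTop
      (nhds (Set.indicator U (fun _ => (1:ℝ)) x)) := by
    intro x
    by_cases hx : x ∈ U
    · -- F m x = 1 for all m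
      obtain ⟨k, hkI, hkLag⟩ := by
        rw [hU] at hx
        simpa using hx
      have hval : ∀ t : ℝ, 0 < t → psiC y (Ψ t) x = psiC y ψ x - t := by
        intro t ht
        have h1 : psiC y ψ x = dist x (y k) ^ 2 - ψ k := psiC_eq_of_mem hn hkLag
        refine le_antisymm ?_ (hlb t x ht.le)
        have := ciInf_le (Set.Finite.bddBelow (Set.finite_range
          (fun i => dist x (y i) ^ 2 - Ψ t i))) k
        rw [hΨ] at this
        simp only [if_pos hkI] at this
        calc psiC y (Ψ t) x ≤ dist x (y k) ^ 2 - (ψ k + t) := this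
          _ = psiC y ψ x - t := by rw [h1]; ring
      have : ∀ m : ℕ, F m x = 1 := by
        intro m
        rw [hF]; dsimp only
        rw [hval _ (htm m)]
        field_simp
        ring
      rw [Set.indicator_of_mem hx]
      simp only [this]
      exact tendsto_const_nhds
    · obtain ⟨gap, hgap, hgapmem⟩ : ∃ gap > 0, ∀ k ∈ I,
          psiC y ψ x + gap ≤ dist x (y k) ^ 2 - ψ k := by
        have hlt : ∀ k ∈ I, psiC y ψ x < dist x (y k) ^ 2 - ψ k := by
          intro k hk
          have hnot : x ∉ Lag y ψ k := fun hmem => hx (Set.mem_biUnion hk hmem)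
          simp only [Lag, Set.mem_setOf_eq] at hnot
          push_neg at hnot
          obtain ⟨i, hik, hlt'⟩ := hnot
          exact lt_of_le_of_lt (psiC_le hn x i) hlt'
        refine ⟨(I.inf' hne fun k => dist x (y k) ^ 2 - ψ k) - psiC y ψ x, ?_, ?_⟩
        · rw [gt_iff_lt, sub_pos, Finset.lt_inf'_iff]
          exact hlt
        · intro k hk
          have : I.inf' hne (fun k => dist x (y k) ^ 2 - ψ k) ≤ dist x (y k) ^ 2 - ψ k :=
            Finset.inf'_le _ hk
          linarith
      have hval : ∀ t : ℝ, 0 < t → t ≤ gap → psiC y (Ψ t) x = psiC y ψ x := by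
        intro t ht htg
        refine le_antisymm (hmono t x ht.le) (le_ciInf fun i => ?_)
        rw [hΨ]; dsimp only
        split
        · next hi => have := hgapmem i hi; linarith
        · have := psiC_le (y := y) (ψ := ψ) hn x i; linarith
      rw [Set.indicator_of_notMem hx]
      have hev : ∀ᶠ m in Filter.atTop, F m x = 0 := by
        obtain ⟨M, hM⟩ := exists_nat_gt (1 / gap)
        refine Filter.eventually_atTop.2 ⟨M, fun m hm => ?_⟩
        have h1 : (1:ℝ) / (m + 1) ≤ gap := by
          rw [div_le_iff₀ (by positivity)]
          have h2 : (1:ℝ) / gap < M := hM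
          have h3 : (M:ℝ) ≤ m + 1 := by
            have h4 : (M:ℝ) ≤ (m:ℝ) := Nat.cast_le.2 hm
            linarith
          rw [div_lt_iff₀ hgap] at h2
          calc (1:ℝ) = 1 := rfl
            _ ≤ gap * (m+1) := by nlinarith
        rw [hF]; dsimp only
        rw [hval _ (htm m) h1]
        ring
      exact Filter.Tendsto.congr' (Filter.EventuallyEq.symm hev) tendsto_const_nhds
  -- dominated convergence
  have hDCT : Filter.Tendsto (fun m => ∫ x, F m x ∂ν) Filter.atTop
      (nhds (∫ x, Set.indicator U (fun _ => (1:ℝ)) x ∂ν)) := by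
    refine MeasureTheory.tendsto_integral_of_dominated_convergence
      (fun _ => (1:ℝ)) (fun m => ?_) (MeasureTheory.integrable_const 1) (fun m => ?_) ?_
    · exact (Continuous.aestronglyMeasurable (by
        exact continuous_const.mul (hcont.sub (hcontΨ _))))
    · refine Filter.Eventually.of_forall fun x => ?_
      have h1 := hmono (1/(m+1)) x (htm m).le
      have h2 := hlb (1/(m+1)) x (htm m).le
      rw [hF]; dsimp only
      rw [Real.norm_eq_abs, abs_le]
      constructor
      · have : (0:ℝ) ≤ (m+1:ℝ) * (psiC y ψ x - psiC y (Ψ (1/(m+1))) x) := by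
          apply mul_nonneg (by positivity); linarith
        linarith
      · have hle : psiC y ψ x - psiC y (Ψ (1/(m+1))) x ≤ 1/(m+1) := by linarith
        calc (m+1:ℝ) * (psiC y ψ x - psiC y (Ψ (1/(m+1))) x) ≤ (m+1:ℝ) * (1/(m+1)) :=
            mul_le_mul_of_nonneg_left hle (by positivity)
          _ = 1 := by field_simp
    · exact Filter.Eventually.of_forall hlim
  have hind : ∫ x, Set.indicator U (fun _ => (1:ℝ)) x ∂ν = (ν U).toReal := by
    rw [MeasureTheory.integral_indicator hUmeas]
    simp
    rfl
  rw [hind] at hDCT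
  exact ge_of_tendsto' hDCT hFle |>.trans_eq rfl

end HallMeasure

lemma map_finset_sum' {δ β γ : Type*} [MeasurableSpace β] [MeasurableSpace γ] (s : Finset δ)
    (μ : δ → Measure β) {g : β → γ} (hg : Measurable g) :
    (∑ i ∈ s, μ i).map g = ∑ i ∈ s, (μ i).map g := by
  ext A hA
  rw [Measure.map_apply hg hA]
  simp only [Measure.coe_finset_sum, Finset.sum_apply]
  exact Finset.sum_congr rfl fun i _ => (Measure.map_apply hg hA).symm

section Construct
variable {X : Type*} [MetricSpace X] [CompactSpace X] [MeasurableSpace X] [BorelSpace X]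

lemma exists_coupling_dual {n : ℕ} (hn : 0 < n) (y : Fin n → X) (hy : Function.Injective y)
    (α : Fin n → ℝ) (hα : ∀ j, 0 < α j) (hsum : ∑ j, α j = 1)
    (ν : Measure X) [IsProbabilityMeasure ν]
    (μ : Measure X) (hμ : μ = ∑ j, ENNReal.ofReal (α j) • Measure.dirac (y j))
    (ψ : Fin n → ℝ) (hmax : ∀ φ : Fin n → ℝ, dualFun y α ν φ ≤ dualFun y α ν ψ) :
    ∃ π' : Measure (X × X), IsCoupling π' ν μ ∧
      (∫ p : X × X, dist p.1 p.2 ^ 2 ∂π') = dualFun y α ν ψ := by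
  classical
  haveI : Nonempty (Fin n) := Fin.pos_iff_nonempty.1 hn
  set pat : X → Finset (Fin n) := fun x => univ.filter (fun k => x ∈ Lag y ψ k) with hpat
  have hpatmem : ∀ (x : X) (k : Fin n), k ∈ pat x ↔ x ∈ Lag y ψ k := by
    intro x k; simp [hpat]
  set Epart : Finset (Fin n) → Set X := fun P => pat ⁻¹' {P} with hEpart
  have hEmem : ∀ (P : Finset (Fin n)) (x : X), x ∈ Epart P ↔ pat x = P := fun P x => Iff.rfl
  have hEmeas : ∀ P, MeasurableSet (Epart P) := by
    intro P
    have hEq : Epart P = ⋂ k, (if k ∈ P then Lag y ψ k else (Lag y ψ k)ᶜ) := by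
      ext x
      simp only [Set.mem_iInter, hEmem]
      constructor
      · intro h k
        split
        · next hk => exact (hpatmem x k).1 (h ▸ hk)
        · next hk => exact fun hc => hk (h ▸ (hpatmem x k).2 hc)
      · intro h
        ext k
        rw [hpatmem]
        constructor
        · intro hc
          by_contra hk
          have hk2 := h k; rw [if_neg hk] at hk2; exact hk2 hc
        · intro hk
          have hk2 := h k; rwa [if_pos hk] at hk2
    rw [hEq]
    refine MeasurableSet.iInter fun k => ?_
    split
    · exact (isClosed_Lag k).measurableSet
    · exact (isClosed_Lag k).measurableSet.compl
  have hEdisj : ∀ P Q : Finset (Fin n), P ≠ Q → Disjoint (Epart P) (Epart Q) := by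
    intro P Q hPQ
    refine Set.disjoint_left.2 fun x hxP hxQ => hPQ ?_
    exact ((hEmem P x).1 hxP).symm.trans ((hEmem Q x).1 hxQ)
  have hcover : ∀ x : X, x ∈ Epart (pat x) := fun x => rfl
  set sP : Finset (Fin n) → ℝ := fun P => (ν (Epart P)).toReal with hsP
  have hsum_parts : ∀ (T : Finset (Finset (Fin n))), ν (⋃ P ∈ T, Epart P) = ∑ P ∈ T, ν (Epart P) := by
    intro T
    exact measure_biUnion_finset (fun P _ Q _ hPQ => hEdisj P Q hPQ) (fun P _ => hEmeas P)
  have htot : ∑ P, sP P = ∑ i, α i := by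
    have h1 : (⋃ P ∈ (univ : Finset (Finset (Fin n))), Epart P) = Set.univ := by
      refine Set.eq_univ_of_forall fun x => ?_
      exact Set.mem_biUnion (mem_univ (pat x)) (hcover x)
    have h2 := hsum_parts univ
    rw [h1] at h2
    have h3 : (ν Set.univ).toReal = 1 := by simp
    rw [hsP]
    calc ∑ P, (ν (Epart P)).toReal = (∑ P, ν (Epart P)).toReal :=
          (ENNReal.toReal_sum fun P _ => measure_ne_top ν _).symm
      _ = (ν Set.univ).toReal := by rw [← h2]
      _ = ∑ i, α i := by rw [h3, hsum]
  have hhall : ∀ (I : Finset (Fin n)) (Q : Finset (Finset (Fin n))),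
      (∀ P k, k ∈ I → k ∈ P → P ∈ Q) → ∑ k ∈ I, α k ≤ ∑ P ∈ Q, sP P := by
    intro I Q hIQ
    refine (hall_measure hn ν hmax I).trans ?_
    have hsub : (⋃ k ∈ I, Lag y ψ k) ⊆ ⋃ P ∈ Q, Epart P := by
      intro x hx
      obtain ⟨k, hkI, hkL⟩ := Set.mem_iUnion₂.1 hx
      exact Set.mem_biUnion (hIQ (pat x) k hkI ((hpatmem x k).2 hkL)) (hcover x)
    calc (ν (⋃ k ∈ I, Lag y ψ k)).toReal ≤ (ν (⋃ P ∈ Q, Epart P)).toReal :=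
          ENNReal.toReal_mono (measure_ne_top ν _) (measure_mono hsub)
      _ = ∑ P ∈ Q, sP P := by
          rw [hsum_parts Q, ENNReal.toReal_sum fun P _ => measure_ne_top ν _]
  obtain ⟨f, hf0, hfE, hfrow, hfcol⟩ := flow_exists (fun (P : Finset (Fin n)) k => k ∈ P) sP α
    (fun P => ENNReal.toReal_nonneg) (fun i => (hα i).le) htot hhall
  -- the slices
  set c : Finset (Fin n) → Fin n → ENNReal := fun P k => ENNReal.ofReal (f P k / sP P) with hc
  set νk : Fin n → Measure X := fun k => ∑ P, c P k • ν.restrict (Epart P) with hνk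
  have hs0 : ∀ P, sP P = 0 → ν (Epart P) = 0 := by
    intro P hP
    rcases (ENNReal.toReal_eq_zero_iff _).1 hP with h | h
    · exact h
    · exact absurd h (measure_ne_top ν _)
  have hsne : ∀ P, ν (Epart P) ≠ 0 → sP P ≠ 0 := fun P h hc => h (hs0 P hc)
  have hfP0 : ∀ P k, ν (Epart P) = 0 → f P k = 0 := by
    intro P k hP
    have h1 : f P k ≤ ∑ i, f P i := Finset.single_le_sum (fun i _ => hf0 P i) (mem_univ k)
    have h2 : sP P = 0 := by rw [hsP]; simp [hP]
    rw [hfrow P, h2] at h1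
    exact le_antisymm h1 (hf0 P k)
  have hcval : ∀ P k, ν (Epart P) ≠ 0 → c P k * ν (Epart P) = ENNReal.ofReal (f P k) := by
    intro P k hP
    rw [hc]
    dsimp only
    have hsPdef : (ν (Epart P)) = ENNReal.ofReal (sP P) :=
      (ENNReal.ofReal_toReal (measure_ne_top ν (Epart P))).symm
    rw [hsPdef,
      ← ENNReal.ofReal_mul (div_nonneg (hf0 P k) ENNReal.toReal_nonneg),
      div_mul_cancel₀ _ (hsne P hP)]
  have hνkapp : ∀ (k : Fin n) (A : Set X), MeasurableSet A →
      νk k A = ∑ P, c P k * ν (A ∩ Epart P) := by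
    intro k A hA
    rw [hνk]
    simp [Measure.coe_finset_sum, Measure.restrict_apply hA]
  have hνk_univ : ∀ k, νk k Set.univ = ENNReal.ofReal (α k) := by
    intro k
    rw [hνkapp k Set.univ MeasurableSet.univ]
    have : ∀ P : Finset (Fin n), c P k * ν (Set.univ ∩ Epart P) = ENNReal.ofReal (f P k) := by
      intro P
      rw [Set.univ_inter]
      by_cases hP : ν (Epart P) = 0
      · rw [hP, mul_zero, hfP0 P k hP, ENNReal.ofReal_zero]
      · exact hcval P k hP
    rw [Finset.sum_congr rfl fun P _ => this P,
      ← ENNReal.ofReal_sum_of_nonneg (fun P _ => hf0 P k), hfcol k]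
  haveI hνk_fin : ∀ k, IsFiniteMeasure (νk k) := by
    intro k
    constructor
    rw [hνk_univ k]
    exact ENNReal.ofReal_lt_top
  have hνtot : ∑ k, νk k = ν := by
    ext A hA
    rw [Measure.coe_finset_sum, Finset.sum_apply]
    rw [Finset.sum_congr rfl fun k _ => hνkapp k A hA, Finset.sum_comm]
    have hper : ∀ P : Finset (Fin n), ∑ k, c P k * ν (A ∩ Epart P) = ν (A ∩ Epart P) := by
      intro P
      rw [← Finset.sum_mul]
      by_cases hP : ν (Epart P) = 0
      · have : ν (A ∩ Epart P) = 0 :=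
          measure_mono_null Set.inter_subset_right hP
        rw [this, mul_zero]
      · have h1 : ∑ k, c P k = 1 := by
          rw [hc]
          dsimp only
          rw [← ENNReal.ofReal_sum_of_nonneg (fun k _ => div_nonneg (hf0 P k) ENNReal.toReal_nonneg),
            ← Finset.sum_div, hfrow P, div_self (hsne P hP), ENNReal.ofReal_one]
        rw [h1, one_mul]
    rw [Finset.sum_congr rfl fun P _ => hper P]
    have h2 : ∑ P, ν (A ∩ Epart P) = ν (⋃ P ∈ (univ : Finset (Finset (Fin n))), (A ∩ Epart P)) := by
      refine (measure_biUnion_finset ?_ ?_).symm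
      · intro P _ Q _ hPQ
        exact (hEdisj P Q hPQ).mono Set.inter_subset_right Set.inter_subset_right
      · exact fun P _ => hA.inter (hEmeas P)
    rw [h2]
    congr 1
    ext x
    simp only [Set.mem_iUnion, Set.mem_inter_iff]
    constructor
    · rintro ⟨P, _, hxA, _⟩; exact hxA
    · intro hxA; exact ⟨pat x, by simp, hxA, hcover x⟩
  have hνconc : ∀ k, νk k ((Lag y ψ k)ᶜ) = 0 := by
    intro k
    rw [hνkapp k _ (isClosed_Lag k).measurableSet.compl]
    refine Finset.sum_eq_zero fun P _ => ?_
    by_cases hkP : k ∈ P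
    · have : (Lag y ψ k)ᶜ ∩ Epart P = ∅ := by
        ext x
        simp only [Set.mem_inter_iff, Set.mem_compl_iff, Set.mem_empty_iff_false, iff_false,
          not_and]
        intro hxc hxE
        exact hxc ((hpatmem x k).1 (((hEmem P x).1 hxE).symm ▸ hkP))
      rw [this, measure_empty, mul_zero]
    · have : f P k = 0 := hfE P k hkP
      rw [hc]; dsimp only
      rw [this, zero_div, ENNReal.ofReal_zero, zero_mul]
  -- the coupling
  set π' : Measure (X × X) := ∑ k, ((νk k).prod (Measure.dirac (y k))) with hπ'
  have hmk : ∀ k : Fin n, Measurable (fun x : X => (x, y k)) := fun k =>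
    measurable_prodMk_right
  have hprodk : ∀ k, (νk k).prod (Measure.dirac (y k)) = (νk k).map (fun x => (x, y k)) :=
    fun k => Measure.prod_dirac (y k)
  refine ⟨π', ⟨?_, ?_⟩, ?_⟩
  · rw [hπ', map_finset_sum' univ _ measurable_fst]
    have : ∀ k : Fin n, ((νk k).prod (Measure.dirac (y k))).map Prod.fst = νk k := by
      intro k
      rw [hprodk k, Measure.map_map measurable_fst (hmk k)]
      have : (Prod.fst ∘ fun x : X => (x, y k)) = id := rfl
      rw [this, Measure.map_id]
    rw [Finset.sum_congr rfl fun k _ => this k, hνtot]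
  · rw [hπ', map_finset_sum' univ _ measurable_snd]
    have : ∀ k : Fin n, ((νk k).prod (Measure.dirac (y k))).map Prod.snd
        = ENNReal.ofReal (α k) • Measure.dirac (y k) := by
      intro k
      rw [hprodk k, Measure.map_map measurable_snd (hmk k)]
      have h1 : (Prod.snd ∘ fun x : X => (x, y k)) = fun _ => y k := rfl
      rw [h1, Measure.map_const, hνk_univ k]
    rw [Finset.sum_congr rfl fun k _ => this k, hμ]
  · have hcost_cont : Continuous (fun p : X × X => dist p.1 p.2 ^ 2) :=
      (continuous_fst.dist continuous_snd).pow 2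
    rw [hπ', integral_finset_sum_measure (fun k _ => cont_integrable hcost_cont _)]
    have hterm : ∀ k : Fin n, (∫ p : X × X, dist p.1 p.2 ^ 2 ∂((νk k).prod (Measure.dirac (y k))))
        = (∫ x, psiC y ψ x ∂νk k) + α k * ψ k := by
      intro k
      rw [hprodk k, integral_map (hmk k).aemeasurable hcost_cont.aestronglyMeasurable]
      have hae : (fun x : X => dist x (y k) ^ 2) =ᵐ[νk k] (fun x => psiC y ψ x + ψ k) := by
        have h0 : ∀ᵐ x ∂νk k, x ∈ Lag y ψ k := by
          rw [MeasureTheory.ae_iff]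
          exact hνconc k
        filter_upwards [h0] with x hx
        have := psiC_eq_of_mem hn hx
        linarith
      calc (∫ x, dist x (y k) ^ 2 ∂νk k) = ∫ x, (psiC y ψ x + ψ k) ∂νk k :=
            integral_congr_ae hae
        _ = (∫ x, psiC y ψ x ∂νk k) + ∫ _, ψ k ∂νk k :=
            integral_add (cont_integrable (continuous_psiC hn) _) (integrable_const _)
        _ = (∫ x, psiC y ψ x ∂νk k) + α k * ψ k := by
            rw [integral_const, smul_eq_mul]
            congr 1
            show (νk k Set.univ).toReal * ψ k = α k * ψ k
            rw [hνk_univ k, ENNReal.toReal_ofReal (hα k).le]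
    rw [Finset.sum_congr rfl fun k _ => hterm k, Finset.sum_add_distrib]
    rw [← integral_finset_sum_measure (fun k _ => cont_integrable (continuous_psiC hn) _), hνtot]
    rfl

end Construct

/-- On the interior of a Laguerre cell, an optimal semi-discrete coupling is the
product of the restricted source measure with the Dirac mass at the cell's atom;
consequently the restricted transport cost is an integral against `ν`. -/
theorem stmt5 {X : Type*} [MetricSpace X] [CompactSpace X]
    [MeasurableSpace X] [BorelSpace X]
    (n : ℕ) (hn : 0 < n) (y : Fin n → X) (hy : Function.Injective y)
    (α : Fin n → ℝ) (hα : ∀ j, 0 < α j) (hsum : ∑ j, α j = 1)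
    (ν : Measure X) [IsProbabilityMeasure ν]
    (μ : Measure X) (hμ : μ = ∑ j, ENNReal.ofReal (α j) • Measure.dirac (y j))
    (ψ : Fin n → ℝ) (hmax : ∀ φ : Fin n → ℝ, dualFun y α ν φ ≤ dualFun y α ν ψ)
    (π : Measure (X × X)) (hopt : IsOptimalCoupling π ν μ) (j : Fin n) :
    π.restrict ((Lag y ψ j \ TieSet y ψ j) ×ˢ (Set.univ : Set X)) =
      (ν.restrict (Lag y ψ j \ TieSet y ψ j)).prod (Measure.dirac (y j)) ∧
    (∫ p in (Lag y ψ j \ TieSet y ψ j) ×ˢ (Set.univ : Set X),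
        dist p.1 p.2 ^ 2 ∂π) =
      ∫ x in Lag y ψ j \ TieSet y ψ j, dist x (y j) ^ 2 ∂ν := by
  classical
  haveI : Nonempty (Fin n) := Fin.pos_iff_nonempty.1 hn
  obtain ⟨hcpl, hmin⟩ := hopt
  have hπuniv : π Set.univ = 1 := by
    have h := congrArg (fun m : Measure X => m Set.univ) hcpl.1
    rw [Measure.map_apply measurable_fst MeasurableSet.univ] at h
    simpa using h
  haveI : IsProbabilityMeasure π := ⟨hπuniv⟩
  set S : Set X := Lag y ψ j \ TieSet y ψ j with hS
  have hSmeas : MeasurableSet S :=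
    (isClosed_Lag j).measurableSet.diff (isClosed_TieSet j).measurableSet
  obtain ⟨π₀, hπ₀cpl, hπ₀cost⟩ := exists_coupling_dual hn y hy α hα hsum ν μ hμ ψ hmax
  have hcost_le : (∫ p : X × X, dist p.1 p.2 ^ 2 ∂π) ≤ dualFun y α ν ψ :=
    (hmin π₀ hπ₀cpl).trans_eq hπ₀cost
  set ψhat : X → ℝ := fun z => ∑ k, if z = y k then ψ k else 0 with hψhat
  have hψhat_meas : Measurable ψhat := by
    refine Finset.measurable_sum _ fun k _ => ?_
    refine Measurable.ite ?_ measurable_const measurable_const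
    have h1 : {z : X | z = y k} = {y k} := by ext z; simp
    rw [h1]
    exact isClosed_singleton.measurableSet
  have hψhat_val : ∀ i, ψhat (y i) = ψ i := by
    intro i
    rw [hψhat]
    dsimp only
    rw [Finset.sum_eq_single i]
    · simp
    · intro k _ hk
      rw [if_neg]
      exact fun hc => hk (hy hc).symm
    · intro h; exact absurd (mem_univ i) h
  have hψhat_bd : ∀ z, ‖ψhat z‖ ≤ ∑ k, |ψ k| := by
    intro z
    rw [hψhat, Real.norm_eq_abs]
    refine (Finset.abs_sum_le_sum_abs _ _).trans (Finset.sum_le_sum fun k _ => ?_)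
    split
    · exact le_refl _
    · simp [abs_nonneg]
  set g : X × X → ℝ := fun p => psiC y ψ p.1 + ψhat p.2 with hg
  set fcost : X × X → ℝ := fun p => dist p.1 p.2 ^ 2 with hfcost
  have hfcost_cont : Continuous fcost := (continuous_fst.dist continuous_snd).pow 2
  have hrange_meas : MeasurableSet (Set.range y) := (Set.finite_range y).isClosed.measurableSet
  have hbad : π (Prod.snd ⁻¹' (Set.range y)ᶜ) = 0 := by
    rw [← Measure.map_apply measurable_snd hrange_meas.compl, hcpl.2, hμ]
    simp only [Measure.coe_finset_sum, Finset.sum_apply, Measure.smul_apply, smul_eq_mul]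
    refine Finset.sum_eq_zero fun i _ => ?_
    rw [Measure.dirac_apply' _ hrange_meas.compl,
      Set.indicator_of_notMem (by simp : y i ∉ (Set.range y)ᶜ), mul_zero]
  have hint1 : Integrable (fun p : X × X => psiC y ψ p.1) π :=
    cont_integrable ((continuous_psiC hn).comp continuous_fst) π
  have hint2 : Integrable (fun p : X × X => ψhat p.2) π := by
    refine (integrable_const (∑ k, |ψ k|)).mono'
      ((hψhat_meas.comp measurable_snd).aestronglyMeasurable) ?_
    exact Filter.Eventually.of_forall fun p => hψhat_bd p.2
  have hInt_g : Integrable g π := hint1.add hint2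
  have e1 : ∫ x, psiC y ψ x ∂ν = ∫ p : X × X, psiC y ψ p.1 ∂π := by
    rw [← hcpl.1,
      integral_map measurable_fst.aemeasurable (continuous_psiC hn).aestronglyMeasurable]
  have e2 : ∫ z, ψhat z ∂μ = ∫ p : X × X, ψhat p.2 ∂π := by
    rw [← hcpl.2, integral_map measurable_snd.aemeasurable hψhat_meas.aestronglyMeasurable]
  have e3 : ∫ z, ψhat z ∂μ = ∑ k, α k * ψ k := by
    have hintk : ∀ k : Fin n, Integrable ψhat (ENNReal.ofReal (α k) • Measure.dirac (y k)) := by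
      intro k
      haveI : IsFiniteMeasure (ENNReal.ofReal (α k) • Measure.dirac (y k) : Measure X) := by
        constructor
        simp [lt_top_iff_ne_top]
      exact (integrable_const (∑ i, |ψ i|)).mono' hψhat_meas.aestronglyMeasurable
        (Filter.Eventually.of_forall fun z => hψhat_bd z)
    rw [hμ, integral_finset_sum_measure fun k _ => hintk k]
    refine Finset.sum_congr rfl fun k _ => ?_
    rw [integral_smul_measure, integral_dirac' _ _ hψhat_meas.stronglyMeasurable,
      hψhat_val k, ENNReal.toReal_ofReal (hα k).le, smul_eq_mul]
  have hgint : ∫ p, g p ∂π = dualFun y α ν ψ := by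
    rw [hg]
    rw [integral_add hint1 hint2, ← e1, ← e2, e3, dualFun]
  have hgle : ∀ᵐ p ∂π, g p ≤ fcost p := by
    rw [MeasureTheory.ae_iff]
    refine measure_mono_null ?_ hbad
    intro p hp
    simp only [Set.mem_setOf_eq, not_le] at hp
    show p.2 ∉ Set.range y
    intro hmem
    obtain ⟨i, hi⟩ := hmem
    have h1 : ψhat p.2 = ψ i := by rw [← hi]; exact hψhat_val i
    have h2 := psiC_le (y := y) (ψ := ψ) hn p.1 i
    have h3 : dist p.1 (y i) ^ 2 = fcost p := by rw [hfcost]; dsimp only; rw [hi]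
    have : g p ≤ fcost p := by
      rw [hg]; dsimp only; rw [h1]; linarith
    exact absurd hp (not_lt.2 this)
  have hfg0 : ∀ᵐ p ∂π, fcost p - g p = 0 := by
    have hnn : 0 ≤ᵐ[π] fun p => fcost p - g p := by
      filter_upwards [hgle] with p hp
      simp only [Pi.zero_apply]
      linarith
    have hintfg : Integrable (fun p => fcost p - g p) π :=
      (cont_integrable hfcost_cont π).sub hInt_g
    have hmono := integral_mono_ae hInt_g (cont_integrable hfcost_cont π) hgle
    have hz : ∫ p, (fcost p - g p) ∂π = 0 := by
      rw [integral_sub (cont_integrable hfcost_cont π) hInt_g]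
      have hle2 : (∫ p, fcost p ∂π) ≤ dualFun y α ν ψ := hcost_le
      rw [hgint] at hmono ⊢
      linarith
    exact (integral_eq_zero_iff_of_nonneg_ae hnn hintfg).1 hz
  have hnullset : π {p : X × X | ¬ (fcost p - g p = 0)} = 0 := MeasureTheory.ae_iff.1 hfg0
  have hnull : ∀ i : Fin n, i ≠ j → π (S ×ˢ ({y i} : Set X)) = 0 := by
    intro i hij
    refine measure_mono_null ?_ hnullset
    rintro ⟨x, z⟩ ⟨hxS, hz⟩
    have hz' : z = y i := hz
    subst hz'
    simp only [Set.mem_setOf_eq]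
    have h1 : psiC y ψ x = dist x (y j) ^ 2 - ψ j := psiC_eq_of_mem hn hxS.1
    have h2 : dist x (y j) ^ 2 - ψ j < dist x (y i) ^ 2 - ψ i := strict_cell_lt hn hxS hij
    have h3 : ψhat (y i) = ψ i := hψhat_val i
    rw [hfcost, hg]; dsimp only
    rw [h3, h1]
    exact ne_of_gt (by linarith)
  set Null : Set (X × X) := (Prod.snd ⁻¹' (Set.range y)ᶜ) ∪
    ⋃ i ∈ {i : Fin n | i ≠ j}, S ×ˢ ({y i} : Set X) with hNullDef
  have hNull0 : π Null = 0 := by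
    refine measure_union_null hbad ?_
    exact (measure_biUnion_null_iff (Set.to_countable _)).2 fun i hi => hnull i hi
  have hkey : ∀ A : Set (X × X),
      π (A ∩ S ×ˢ (Set.univ : Set X)) = π (A ∩ S ×ˢ ({y j} : Set X)) := by
    intro A
    refine le_antisymm ?_ (measure_mono fun p hp => ⟨hp.1, hp.2.1, Set.mem_univ _⟩)
    have hsubset : A ∩ S ×ˢ (Set.univ : Set X) ⊆ (A ∩ S ×ˢ ({y j} : Set X)) ∪ Null := by
      rintro ⟨x, z⟩ ⟨hA, hxS, -⟩
      by_cases hz : z ∈ Set.range y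
      · obtain ⟨i, hi⟩ := hz
        by_cases hij : i = j
        · exact Or.inl ⟨hA, hxS, by rw [← hi, hij]; exact rfl⟩
        · refine Or.inr (Or.inr ?_)
          refine Set.mem_biUnion (show i ∈ {i : Fin n | i ≠ j} from hij) ?_
          exact ⟨hxS, by rw [← hi]; exact rfl⟩
      · exact Or.inr (Or.inl hz)
    calc π (A ∩ S ×ˢ (Set.univ : Set X)) ≤ π ((A ∩ S ×ˢ ({y j} : Set X)) ∪ Null) :=
          measure_mono hsubset
      _ ≤ π (A ∩ S ×ˢ ({y j} : Set X)) + π Null := measure_union_le _ _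
      _ = π (A ∩ S ×ˢ ({y j} : Set X)) := by rw [hNull0, add_zero]
  have hfst : ∀ C : Set X, MeasurableSet C → π (C ×ˢ (Set.univ : Set X)) = ν C := by
    intro C hC
    rw [← hcpl.1, Measure.map_apply measurable_fst hC]
    congr 1
    ext p
    simp [Set.mem_prod]
  have hCyj : ∀ C : Set X, MeasurableSet C → C ⊆ S →
      π (C ×ˢ ({y j} : Set X)) = ν C := by
    intro C hC hCS
    have h1 := hkey (C ×ˢ (Set.univ : Set X))
    have e1 : C ×ˢ (Set.univ : Set X) ∩ S ×ˢ (Set.univ : Set X)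
        = C ×ˢ (Set.univ : Set X) := by
      ext ⟨x, z⟩
      simp only [Set.mem_inter_iff, Set.mem_prod, Set.mem_univ, and_true]
      exact ⟨fun h => h.1, fun h => ⟨h, hCS h⟩⟩
    have e2 : C ×ˢ (Set.univ : Set X) ∩ S ×ˢ ({y j} : Set X)
        = C ×ˢ ({y j} : Set X) := by
      ext ⟨x, z⟩
      simp only [Set.mem_inter_iff, Set.mem_prod, Set.mem_univ, true_and, and_true,
        Set.mem_singleton_iff]
      exact ⟨fun h => ⟨h.1, h.2.2⟩, fun h => ⟨h.1, hCS h.1, h.2⟩⟩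
    rw [e1, e2] at h1
    rw [← h1, hfst C hC]
  have hmkj : Measurable (fun x : X => (x, y j)) := measurable_prodMk_right
  have hgoal1 : π.restrict (S ×ˢ (Set.univ : Set X))
      = (ν.restrict S).prod (Measure.dirac (y j)) := by
    ext A hA
    rw [Measure.restrict_apply hA, Measure.prod_dirac,
      Measure.map_apply hmkj hA, Measure.restrict_apply (hmkj hA)]
    rw [hkey A]
    have e3 : A ∩ S ×ˢ ({y j} : Set X)
        = (((fun x : X => (x, y j)) ⁻¹' A) ∩ S) ×ˢ ({y j} : Set X) := by
      ext ⟨x, z⟩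
      simp only [Set.mem_inter_iff, Set.mem_prod, Set.mem_singleton_iff, Set.mem_preimage]
      constructor
      · rintro ⟨hA2, hxS, hz⟩
        subst hz
        exact ⟨⟨hA2, hxS⟩, rfl⟩
      · rintro ⟨⟨hA2, hxS⟩, hz⟩
        subst hz
        exact ⟨hA2, hxS, rfl⟩
    rw [e3, hCyj _ ((hmkj hA).inter hSmeas) Set.inter_subset_right]
  refine ⟨hgoal1, ?_⟩
  calc (∫ p in S ×ˢ (Set.univ : Set X), dist p.1 p.2 ^ 2 ∂π)
      = ∫ p, dist p.1 p.2 ^ 2 ∂((ν.restrict S).prod (Measure.dirac (y j))) := by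
        rw [← hgoal1]
    _ = ∫ x, dist x (y j) ^ 2 ∂(ν.restrict S) := by
        rw [Measure.prod_dirac,
          integral_map hmkj.aemeasurable hfcost_cont.aestronglyMeasurable]
    _ = ∫ x in S, dist x (y j) ^ 2 ∂ν := rfl
end

section
/- Let (X,d) be a compact metric space and let y^1, …, y^n ∈ X be distinct. Choose δ > 0 such that the open balls B_δ(y^j) are pairwise disjoint, and let μ = (1/n) Σ_j δ_{y^j}. For a probability measure ν on X, for each j define ν_j := ν|_{B_δ(y^j)} / ν(B_δ(y^j)) (assuming ν(B_δ(y^j)) > 0) and ν̄ⁿ := ν_1 ⊗ ⋯ ⊗ ν_n on X^n. Then, with d_n(x, y)² = (1/n) Σ_j d(x^j, y^j)² on X^n and y = (y^1,…,y^n): ( ∫_{X^n} d_n(x, y) dν̄ⁿ(x) )² ≤ (1/n) Σ_{j=1}^n (1/ν(B_δ(y^j))) ∫_{B_δ(y^j)} d²(x, y^j) dν(x) ≤ α_ν · W₂²(ν, μ), where α_ν := 1 / ( n · min_j ν(B_δ(y^j)) ). -/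
open MeasureTheory

/-- The squared 2-Wasserstein distance as an infimum of transport costs. -/
noncomputable def W2sq {X : Type*} [MetricSpace X] [MeasurableSpace X]
    (ν μ : Measure X) : ℝ :=
  sInf {r : ℝ | ∃ π : Measure (X × X), IsCoupling π ν μ ∧
    r = ∫ p : X × X, dist p.1 p.2 ^ 2 ∂π}

/-- The empirical measure `(1/n) Σ_j δ_{y^j}`. -/
noncomputable def emp {Ω : Type*} [MeasurableSpace Ω] (n : ℕ)
    (x : Fin n → Ω) : Measure Ω :=
  (n : ENNReal)⁻¹ • ∑ j, Measure.dirac (x j)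

section Aux

lemma isFiniteMeasure_aux {α : Type*} [MeasurableSpace α] (μ : Measure α)
    (h : IsProbabilityMeasure μ) : IsFiniteMeasure μ := by
  haveI := h; infer_instance

lemma sigmaFinite_aux {α : Type*} [MeasurableSpace α] (μ : Measure α)
    (h : IsProbabilityMeasure μ) : SigmaFinite μ := by
  haveI := h; infer_instance

lemma sfinite_aux {α : Type*} [MeasurableSpace α] (μ : Measure α)
    (h : IsProbabilityMeasure μ) : SFinite μ := by
  haveI := h; infer_instance

lemma pi_isProbabilityMeasure_aux {ι : Type*} [Fintype ι] {α : ι → Type*}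
    [∀ i, MeasurableSpace (α i)] (μ : ∀ i, Measure (α i))
    (h : ∀ i, IsProbabilityMeasure (μ i)) : IsProbabilityMeasure (Measure.pi μ) := by
  haveI := h; infer_instance

/-- The marginal of a product of probability measures is the corresponding factor. -/
lemma pi_map_eval_aux {ι : Type*} [Fintype ι] {α : ι → Type*} [∀ i, MeasurableSpace (α i)]
    (μ : ∀ i, Measure (α i)) (h : ∀ i, IsProbabilityMeasure (μ i)) (i : ι) :
    (Measure.pi μ).map (Function.eval i) = μ i := by
  classical
  haveI := h
  ext s hs
  rw [Measure.map_apply (measurable_pi_apply i) hs, Set.eval_preimage, Measure.pi_pi]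
  rw [Finset.prod_eq_single i (fun j _ hj => by simp [Function.update_of_ne hj]) (by simp)]
  simp

end Aux

/-- Quantitative estimate for the localized product measure built from a measure
close to the empirical measure `μ = (1/n) Σ_j δ_{y^j}`. -/
theorem stmt17 {X : Type*} [MetricSpace X] [CompactSpace X]
    [MeasurableSpace X] [BorelSpace X]
    (n : ℕ) (hn : 0 < n) (y : Fin n → X) (hy : Function.Injective y)
    (δ : ℝ) (hδ : 0 < δ)
    (hdisj : ∀ i j : Fin n, i ≠ j →
      Disjoint (Metric.ball (y i) δ) (Metric.ball (y j) δ))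
    (ν : Measure X) [IsProbabilityMeasure ν]
    (hpos : ∀ j, 0 < ν (Metric.ball (y j) δ)) :
    (∫ x : Fin n → X,
        Real.sqrt ((1 / (n : ℝ)) * ∑ j, dist (x j) (y j) ^ 2)
        ∂(Measure.pi fun j =>
          (ν (Metric.ball (y j) δ))⁻¹ • ν.restrict (Metric.ball (y j) δ))) ^ 2 ≤
      (1 / (n : ℝ)) * ∑ j, (1 / (ν (Metric.ball (y j) δ)).toReal) *
        ∫ x in Metric.ball (y j) δ, dist x (y j) ^ 2 ∂ν ∧
    (1 / (n : ℝ)) * ∑ j, (1 / (ν (Metric.ball (y j) δ)).toReal) *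
        ∫ x in Metric.ball (y j) δ, dist x (y j) ^ 2 ∂ν ≤
      (1 / ((n : ℝ) * ⨅ j, (ν (Metric.ball (y j) δ)).toReal)) * W2sq ν (emp n y) := by
  classical
  haveI : Nonempty (Fin n) := ⟨⟨0, hn⟩⟩
  haveI : IsFiniteMeasure ν := isFiniteMeasure_aux ν ‹_›
  haveI : SFinite ν := sfinite_aux ν ‹_›
  set B : Fin n → Set X := fun j => Metric.ball (y j) δ with hBdef
  have hc_ne : ∀ j, ν (B j) ≠ 0 := fun j => (hpos j).ne'
  have hc_top : ∀ j, ν (B j) ≠ ⊤ := fun j => measure_ne_top ν _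
  have hcR_pos : ∀ j, 0 < (ν (B j)).toReal := fun j =>
    ENNReal.toReal_pos (hc_ne j) (hc_top j)
  have hprob : ∀ j, IsProbabilityMeasure ((ν (B j))⁻¹ • ν.restrict (B j)) := fun j =>
    ⟨by rw [Measure.smul_apply, Measure.restrict_apply_univ, smul_eq_mul,
      ENNReal.inv_mul_cancel (hc_ne j) (hc_top j)]⟩
  haveI hsig : ∀ j, SigmaFinite ((ν (B j))⁻¹ • ν.restrict (B j)) := fun j =>
    sigmaFinite_aux _ (hprob j)
  set P : Measure (Fin n → X) :=
    Measure.pi fun j => (ν (B j))⁻¹ • ν.restrict (B j) with hPdef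
  haveI hPprob : IsProbabilityMeasure P := pi_isProbabilityMeasure_aux _ hprob
  haveI : IsFiniteMeasure P := isFiniteMeasure_aux _ hPprob
  set D : ℝ := Metric.diam (Set.univ : Set X) with hD
  have hdistD : ∀ a b : X, dist a b ≤ D := fun a b =>
    Metric.dist_le_diam_of_mem (isCompact_univ.isBounded) trivial trivial
  have hD0 : 0 ≤ D := Metric.diam_nonneg
  -- continuity / integrability of the coordinate functions
  have hcont : ∀ j, Continuous fun x : Fin n → X => dist (x j) (y j) ^ 2 := fun j =>
    ((continuous_apply j).dist continuous_const).pow 2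
  have hIntP : ∀ j, Integrable (fun x : Fin n → X => dist (x j) (y j) ^ 2) P := by
    intro j
    refine Integrable.mono' (integrable_const (D ^ 2)) (hcont j).aestronglyMeasurable
      (Filter.Eventually.of_forall fun x => ?_)
    rw [Real.norm_eq_abs, abs_of_nonneg (by positivity)]
    exact pow_le_pow_left₀ dist_nonneg (hdistD _ _) 2
  set f : (Fin n → X) → ℝ := fun x => (1 / (n : ℝ)) * ∑ j, dist (x j) (y j) ^ 2 with hfdef
  have hf_nonneg : ∀ x, 0 ≤ f x := by
    intro x
    apply mul_nonneg (by positivity)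
    exact Finset.sum_nonneg fun j _ => by positivity
  have hf_le : ∀ x, f x ≤ D ^ 2 := by
    intro x
    rw [hfdef]
    have hsum : ∑ j, dist (x j) (y j) ^ 2 ≤ ∑ _j : Fin n, D ^ 2 :=
      Finset.sum_le_sum fun j _ => pow_le_pow_left₀ dist_nonneg (hdistD _ _) 2
    simp only [Finset.sum_const, Finset.card_univ, Fintype.card_fin, nsmul_eq_mul] at hsum
    calc (1 / (n : ℝ)) * ∑ j, dist (x j) (y j) ^ 2 ≤ (1 / (n : ℝ)) * ((n : ℝ) * D ^ 2) :=
          mul_le_mul_of_nonneg_left hsum (by positivity)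
      _ = D ^ 2 := by
          have hn' : (n : ℝ) ≠ 0 := Nat.cast_ne_zero.mpr hn.ne'
          field_simp
  have hf_int : Integrable f P := by
    rw [hfdef]
    exact (integrable_finset_sum _ fun j _ => hIntP j).const_mul _
  have hf_cont : Continuous f := continuous_const.mul (continuous_finset_sum _ fun j _ => hcont j)
  have hsqrt_int : Integrable (fun x => Real.sqrt (f x)) P := by
    refine Integrable.mono' (integrable_const (Real.sqrt (D ^ 2)))
      (Real.continuous_sqrt.comp hf_cont).aestronglyMeasurable
      (Filter.Eventually.of_forall fun x => ?_)
    rw [Real.norm_eq_abs, abs_of_nonneg (Real.sqrt_nonneg _)]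
    exact Real.sqrt_le_sqrt (hf_le x)
  -- Jensen
  have hjen : ∫ x, Real.sqrt (f x) ∂P ≤ Real.sqrt (∫ x, f x ∂P) := by
    have := ConcaveOn.le_map_integral (μ := P) (f := f)
      Real.strictConcaveOn_sqrt.concaveOn Real.continuous_sqrt.continuousOn
      isClosed_Ici (Filter.Eventually.of_forall fun x => hf_nonneg x) hf_int
      (by exact hsqrt_int)
    simpa [Function.comp] using this
  have h1 : (∫ x, Real.sqrt (f x) ∂P) ^ 2 ≤ ∫ x, f x ∂P := by
    have h0 : 0 ≤ ∫ x, Real.sqrt (f x) ∂P :=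
      integral_nonneg fun x => Real.sqrt_nonneg _
    calc (∫ x, Real.sqrt (f x) ∂P) ^ 2 ≤ (Real.sqrt (∫ x, f x ∂P)) ^ 2 :=
          pow_le_pow_left₀ h0 hjen 2
      _ = ∫ x, f x ∂P := Real.sq_sqrt (integral_nonneg hf_nonneg)
  -- the marginals
  have hmar : ∀ j, ∫ x : Fin n → X, dist (x j) (y j) ^ 2 ∂P
      = (1 / (ν (B j)).toReal) * ∫ x in B j, dist x (y j) ^ 2 ∂ν := by
    intro j
    have hmap := pi_map_eval_aux (fun j => (ν (B j))⁻¹ • ν.restrict (B j)) hprob j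
    have hcg : Continuous fun t : X => dist t (y j) ^ 2 := by fun_prop
    calc ∫ x : Fin n → X, dist (x j) (y j) ^ 2 ∂P
        = ∫ t, dist t (y j) ^ 2 ∂(P.map (Function.eval j)) := by
          rw [integral_map (measurable_pi_apply j).aemeasurable
            hcg.aestronglyMeasurable]
      _ = ∫ t, dist t (y j) ^ 2 ∂((ν (B j))⁻¹ • ν.restrict (B j)) := by
          rw [hPdef, hmap]
      _ = (1 / (ν (B j)).toReal) * ∫ x in B j, dist x (y j) ^ 2 ∂ν := by
          rw [integral_smul_measure, ENNReal.toReal_inv, smul_eq_mul, one_div]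
  have hsum : ∫ x, f x ∂P = (1 / (n : ℝ)) * ∑ j, (1 / (ν (B j)).toReal) *
      ∫ x in B j, dist x (y j) ^ 2 ∂ν := by
    rw [hfdef]
    rw [integral_const_mul, integral_finset_sum _ fun j _ => hIntP j]
    exact congrArg _ (Finset.sum_congr rfl fun j _ => hmar j)
  refine ⟨by rw [← hsum]; exact h1, ?_⟩
  -- Second inequality
  set I : Fin n → ℝ := fun j => ∫ x in B j, dist x (y j) ^ 2 ∂ν with hIdef
  have hI_nonneg : ∀ j, 0 ≤ I j := fun j =>
    setIntegral_nonneg Metric.isOpen_ball.measurableSet fun x _ => by positivity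
  set m : ℝ := ⨅ j, (ν (B j)).toReal with hmdef
  have hm_le : ∀ j, m ≤ (ν (B j)).toReal := fun j =>
    ciInf_le (Set.Finite.bddBelow (Set.finite_range _)) j
  have hm_pos : 0 < m := by
    obtain ⟨j0, hj0⟩ := exists_eq_ciInf_of_finite (f := fun j => (ν (B j)).toReal)
    rw [hmdef, ← hj0]
    exact hcR_pos j0
  -- the empirical measure is a probability measure
  have hemp_univ : emp n y Set.univ = 1 := by
    rw [emp, Measure.smul_apply, Measure.coe_finset_sum, Finset.sum_apply,
      smul_eq_mul]
    simp only [Measure.dirac_apply_of_mem (Set.mem_univ _), Finset.sum_const,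
      Finset.card_univ, Fintype.card_fin, nsmul_eq_mul, mul_one]
    exact ENNReal.inv_mul_cancel (by exact_mod_cast hn.ne') (ENNReal.natCast_ne_top n)
  have hemp_prob : IsProbabilityMeasure (emp n y) := ⟨hemp_univ⟩
  haveI := hemp_prob
  haveI : SFinite (emp n y) := sfinite_aux _ hemp_prob
  -- the transport cost set is nonempty
  have hne : {r : ℝ | ∃ π : Measure (X × X), IsCoupling π ν (emp n y) ∧
      r = ∫ p : X × X, dist p.1 p.2 ^ 2 ∂π}.Nonempty := by
    refine ⟨∫ p : X × X, dist p.1 p.2 ^ 2 ∂(ν.prod (emp n y)), ν.prod (emp n y), ⟨?_, ?_⟩, rfl⟩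
    · rw [Measure.map_fst_prod, hemp_univ, one_smul]
    · rw [Measure.map_snd_prod]
      have huniv : ν Set.univ = 1 := ‹IsProbabilityMeasure ν›.measure_univ
      rw [huniv, one_smul]
  -- key estimate for an arbitrary coupling
  have hkey : ∀ r ∈ {r : ℝ | ∃ π : Measure (X × X), IsCoupling π ν (emp n y) ∧
      r = ∫ p : X × X, dist p.1 p.2 ^ 2 ∂π},
      m * ∑ j, (1 / (ν (B j)).toReal) * I j ≤ r := by
    rintro r ⟨π, ⟨hfst, hsnd⟩, rfl⟩
    have hπuniv : π Set.univ = 1 := by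
      have := congrArg (fun μ : Measure X => μ Set.univ) hfst
      simp only [Measure.map_apply measurable_fst MeasurableSet.univ,
        Set.preimage_univ, measure_univ] at this
      exact this
    haveI hπprob : IsProbabilityMeasure π := ⟨hπuniv⟩
    haveI : IsFiniteMeasure π := isFiniteMeasure_aux _ hπprob
    -- integrability
    have hInt2 : Integrable (fun p : X × X => dist p.1 p.2 ^ 2) π := by
      refine Integrable.mono' (integrable_const (D ^ 2))
        ((continuous_fst.dist continuous_snd).pow 2).aestronglyMeasurable
        (Filter.Eventually.of_forall fun p => ?_)
      rw [Real.norm_eq_abs, abs_of_nonneg (by positivity)]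
      exact pow_le_pow_left₀ dist_nonneg (hdistD _ _) 2
    have hIntj : ∀ j, Integrable (fun p : X × X => dist p.1 (y j) ^ 2) π := by
      intro j
      refine Integrable.mono' (integrable_const (D ^ 2))
        ((continuous_fst.dist continuous_const).pow 2).aestronglyMeasurable
        (Filter.Eventually.of_forall fun p => ?_)
      rw [Real.norm_eq_abs, abs_of_nonneg (by positivity)]
      exact pow_le_pow_left₀ dist_nonneg (hdistD _ _) 2
    -- a.e., the second coordinate is an atom
    have hrange : MeasurableSet (Set.range y) := (Set.finite_range y).measurableSet
    have hae : ∀ᵐ p : X × X ∂π, p.2 ∈ Set.range y := by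
      rw [ae_iff]
      have hset : {p : X × X | ¬ p.2 ∈ Set.range y} = Prod.snd ⁻¹' (Set.range y)ᶜ := rfl
      rw [hset, ← Measure.map_apply measurable_snd hrange.compl, hsnd]
      rw [emp, Measure.smul_apply, Measure.coe_finset_sum, Finset.sum_apply, smul_eq_mul]
      have : ∀ j : Fin n, Measure.dirac (y j) (Set.range y)ᶜ = 0 := fun j => by
        rw [Measure.dirac_apply' _ hrange.compl]
        simp [Set.indicator_of_notMem, Set.mem_range_self]
      simp [this]
    set A : Fin n → Set (X × X) := fun j => Prod.fst ⁻¹' B j with hAdef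
    have hA : ∀ j, MeasurableSet (A j) := fun j =>
      measurable_fst Metric.isOpen_ball.measurableSet
    have stepA : ∀ j, I j = ∫ p in A j, dist p.1 (y j) ^ 2 ∂π := by
      intro j
      simp only [hIdef]
      have : (∫ x in B j, dist x (y j) ^ 2 ∂ν)
          = ∫ x in B j, dist x (y j) ^ 2 ∂(π.map Prod.fst) := by rw [hfst]
      rw [this, setIntegral_map Metric.isOpen_ball.measurableSet
        ((by fun_prop : Continuous fun t : X => dist t (y j) ^ 2)).aestronglyMeasurable
        measurable_fst.aemeasurable]
    have stepB : ∀ j, ∫ p in A j, dist p.1 (y j) ^ 2 ∂π ≤ ∫ p in A j, dist p.1 p.2 ^ 2 ∂π := by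
      intro j
      refine integral_mono_ae ((hIntj j).restrict) (hInt2.restrict)
        ((ae_restrict_iff' (hA j)).mpr ?_)
      filter_upwards [hae] with p hp hpA
      obtain ⟨k, hk⟩ := hp
      have hd : dist p.1 (y j) ≤ dist p.1 (y k) := by
        by_cases hkj : k = j
        · subst hkj; exact le_refl _
        · have hp1 : p.1 ∈ B j := hpA
          have hp1k : p.1 ∉ B k := fun hmem =>
            (hdisj k j hkj).ne_of_mem hmem hp1 rfl
          have h1 : dist p.1 (y j) < δ := Metric.mem_ball.mp hp1
          have h2 : δ ≤ dist p.1 (y k) := not_lt.mp fun hlt => hp1k (Metric.mem_ball.mpr hlt)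
          linarith
      calc dist p.1 (y j) ^ 2 ≤ dist p.1 (y k) ^ 2 :=
            pow_le_pow_left₀ dist_nonneg hd 2
        _ = dist p.1 p.2 ^ 2 := by rw [hk]
    have stepC : ∑ j, ∫ p in A j, dist p.1 p.2 ^ 2 ∂π ≤ ∫ p : X × X, dist p.1 p.2 ^ 2 ∂π := by
      have hdisjA : Pairwise (Function.onFun Disjoint A) := fun i j hij =>
        (hdisj i j hij).preimage Prod.fst
      have hunion := integral_iUnion_fintype (μ := π) (f := fun p : X × X => dist p.1 p.2 ^ 2)
        hA hdisjA (fun j => hInt2.integrableOn)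
      rw [← hunion]
      exact setIntegral_le_integral hInt2
        (Filter.Eventually.of_forall fun p => by positivity)
    calc m * ∑ j, (1 / (ν (B j)).toReal) * I j
        = ∑ j, (m * (1 / (ν (B j)).toReal)) * I j := by
          rw [Finset.mul_sum]; exact Finset.sum_congr rfl fun j _ => by ring
      _ ≤ ∑ j, I j := by
          refine Finset.sum_le_sum fun j _ => ?_
          have h1 : m * (1 / (ν (B j)).toReal) ≤ 1 := by
            rw [mul_one_div, div_le_one (hcR_pos j)]
            exact hm_le j
          calc (m * (1 / (ν (B j)).toReal)) * I j ≤ 1 * I j :=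
                mul_le_mul_of_nonneg_right h1 (hI_nonneg j)
            _ = I j := one_mul _
      _ = ∑ j, ∫ p in A j, dist p.1 (y j) ^ 2 ∂π := Finset.sum_congr rfl fun j _ => stepA j
      _ ≤ ∑ j, ∫ p in A j, dist p.1 p.2 ^ 2 ∂π := Finset.sum_le_sum fun j _ => stepB j
      _ ≤ ∫ p : X × X, dist p.1 p.2 ^ 2 ∂π := stepC
  have hfin : m * ∑ j, (1 / (ν (B j)).toReal) * I j ≤ W2sq ν (emp n y) :=
    le_csInf hne hkey
  have hW : ∑ j, (1 / (ν (B j)).toReal) * I j ≤ (1 / m) * W2sq ν (emp n y) := by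
    rw [one_div, inv_mul_eq_div, le_div_iff₀' hm_pos]
    exact hfin
  have hrw : (1 : ℝ) / ((n : ℝ) * m) = (1 / (n : ℝ)) * (1 / m) := by
    rw [one_div, mul_inv, one_div, one_div]
  rw [hrw, mul_assoc]
  exact mul_le_mul_of_nonneg_left hW (by positivity)
end
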